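/- Let P be a finite Γ-colored poset and suppose colors b, c ∈ Γ are never the colors of two neighboring elements (elements in a covering relation) of P. Then for all p, q ≥ 0 and m ≥ 1, the operators ⟨c^q⟩∘⟨b^p⟩ and ⟨b^p⟩∘⟨c^q⟩ agree on all m-tuples of order ideals of P (operator commutation for distant colors). -/

import Mathlib

open scoped Classical

/-- The set of ideals obtainable from the ideal `I` by adding a minimal element of the
complementary filter of color `a`. -/
noncomputable def addSet {P Γ : Type} [Fintype P] [PartialOrder P] [DecidableEq P]
    (κ : P → Γ) (a : Γ) (I : Finset P) : Finset (Finset P) :=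
  (Finset.univ.filter (fun x : P => κ x = a ∧ x ∉ I ∧
    IsLowerSet ((insert x I : Finset P) : Set P))).image (fun x => insert x I)

/-- The raising operator `X_a` applied to a single `m`-tuple of ideals: add a minimal
element of color `a` of the complementary filter to one coordinate, summed over all
coordinates and all such elements. -/
noncomputable def XaT {P Γ : Type} [Fintype P] [PartialOrder P] [DecidableEq P]
    (κ : P → Γ) {m : ℕ} (a : Γ) (T : Fin m → Finset P) : (Fin m → Finset P) →₀ ℚ :=
  ∑ j : Fin m,
    ((addSet κ a (T j)).val.map (fun J => Finsupp.single (Function.update T j J) (1 : ℚ))).sum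

/-- The linear extension of `X_a` to formal `ℚ`-linear combinations of `m`-tuples. -/
noncomputable def XvT {P Γ : Type} [Fintype P] [PartialOrder P] [DecidableEq P]
    (κ : P → Γ) {m : ℕ} (a : Γ) (v : (Fin m → Finset P) →₀ ℚ) : (Fin m → Finset P) →₀ ℚ :=
  v.sum (fun T c => c • XaT κ a T)

/-- The divided power operator `⟨a^k⟩ = X_a^k / k!` on `m`-tuples of ideals. -/
noncomputable def opPowT {P Γ : Type} [Fintype P] [PartialOrder P] [DecidableEq P]
    (κ : P → Γ) {m : ℕ} (a : Γ) (k : ℕ) (v : (Fin m → Finset P) →₀ ℚ) :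
    (Fin m → Finset P) →₀ ℚ :=
  ((k.factorial : ℚ)⁻¹) • (XvT κ a)^[k] v


section Aux

variable {P Γ : Type} [Fintype P] [PartialOrder P] [DecidableEq P]

/-- The set of elements addable to `I` with color `a`. -/
noncomputable def Sset (κ : P → Γ) (a : Γ) (I : Finset P) : Finset P :=
  Finset.univ.filter (fun x : P => κ x = a ∧ x ∉ I ∧
    IsLowerSet ((insert x I : Finset P) : Set P))

lemma mem_Sset {κ : P → Γ} {a : Γ} {I : Finset P} {x : P} :
    x ∈ Sset κ a I ↔ κ x = a ∧ x ∉ I ∧ IsLowerSet ((insert x I : Finset P) : Set P) := by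
  simp [Sset]

/-- Key step: swapping addable elements of non-adjacent colors. -/
lemma key_step {κ : P → Γ} {b c : Γ}
    (hbc : ∀ x y : P, x ⋖ y → ¬ (κ x = b ∧ κ y = c))
    {I : Finset P} (hI : IsLowerSet (I : Set P)) {x y : P}
    (hx : x ∈ Sset κ b I) (hy : y ∈ Sset κ c (insert x I)) :
    y ∈ Sset κ c I ∧ x ∈ Sset κ b (insert y I) := by
  rw [mem_Sset] at hx hy
  obtain ⟨hxb, hxI, hxlow⟩ := hx
  obtain ⟨hyc, hyxI, hylow⟩ := hy
  have hyI : y ∉ I := fun h => hyxI (Finset.mem_insert_of_mem h)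
  have hxy : x ≠ y := fun h => hyxI (h ▸ Finset.mem_insert_self x I)
  have hxny : ¬ x < y := by
    intro hlt
    obtain ⟨w, hw, hwy⟩ := hlt.exists_covby_le
    rcases eq_or_lt_of_le hwy with rfl | hwlt
    · exact hbc x w hw ⟨hxb, hyc⟩
    · have hwmem : w ∈ insert y (insert x I) := by
        have : (w : P) ∈ ((insert y (insert x I) : Finset P) : Set P) :=
          hylow hwlt.le (by simp)
        simpa using this
      have hwI : w ∈ I := by
        rcases Finset.mem_insert.1 hwmem with rfl | h
        · exact absurd rfl hwlt.ne
        rcases Finset.mem_insert.1 h with rfl | h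
        · exact absurd rfl hw.lt.ne'
        · exact h
      exact hxI (hI hw.lt.le hwI)
  have hins : IsLowerSet ((insert y I : Finset P) : Set P) := by
    intro u v hvu hu
    simp only [Finset.coe_insert, Set.mem_insert_iff, Finset.mem_coe] at hu ⊢
    rcases hu with rfl | hu
    · have hv2 : (v : P) ∈ ((insert u (insert x I) : Finset P) : Set P) :=
        hylow hvu (by simp)
      simp only [Finset.coe_insert, Set.mem_insert_iff, Finset.mem_coe] at hv2
      rcases hv2 with rfl | hv2
      · exact Or.inl rfl
      rcases hv2 with rfl | hv2
      · exact absurd (lt_of_le_of_ne hvu hxy) hxny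
      · exact Or.inr hv2
    · exact Or.inr (hI hvu hu)
  refine ⟨mem_Sset.2 ⟨hyc, hyI, hins⟩, mem_Sset.2 ⟨hxb, ?_, ?_⟩⟩
  · simp only [Finset.mem_insert, not_or]
    exact ⟨hxy, hxI⟩
  · rw [Finset.insert_comm]
    exact hylow

/-- The diagonal swap lemma for a single ideal. -/
lemma diag_swap {κ : P → Γ} {b c : Γ}
    (hbc : ∀ x y : P, x ⋖ y →
      ¬ ((κ x = b ∧ κ y = c) ∨ (κ x = c ∧ κ y = b)))
    {I : Finset P} (hI : IsLowerSet (I : Set P)) {M : Type*} [AddCommMonoid M]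
    (f : Finset P → M) :
    ∑ x ∈ Sset κ b I, ∑ y ∈ Sset κ c (insert x I), f (insert y (insert x I)) =
    ∑ y ∈ Sset κ c I, ∑ x ∈ Sset κ b (insert y I), f (insert x (insert y I)) := by
  have hbc1 : ∀ x y : P, x ⋖ y → ¬ (κ x = b ∧ κ y = c) :=
    fun x y h hh => hbc x y h (Or.inl hh)
  have hbc2 : ∀ x y : P, x ⋖ y → ¬ (κ x = c ∧ κ y = b) :=
    fun x y h hh => hbc x y h (Or.inr hh)
  rw [Finset.sum_comm' (t' := Sset κ c I) (s' := fun y => Sset κ b (insert y I)) ?_]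
  · exact Finset.sum_congr rfl fun y _ => Finset.sum_congr rfl fun x _ => by
      rw [Finset.insert_comm]
  · intro x y
    constructor
    · rintro ⟨h1, h2⟩
      obtain ⟨hy', hx'⟩ := key_step hbc1 hI h1 h2
      exact ⟨hx', hy'⟩
    · rintro ⟨h1, h2⟩
      obtain ⟨hx', hy'⟩ := key_step hbc2 hI h2 h1
      exact ⟨hx', hy'⟩

end Aux

section Lin

variable {P Γ : Type} [Fintype P] [PartialOrder P] [DecidableEq P]

variable (κ : P → Γ) {m : ℕ}

lemma XaT_eq (a : Γ) (T : Fin m → Finset P) :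
    XaT κ a T = ∑ j : Fin m, ∑ x ∈ Sset κ a (T j),
      Finsupp.single (Function.update T j (insert x (T j))) (1 : ℚ) := by
  unfold XaT addSet
  refine Finset.sum_congr rfl fun j _ => ?_
  have hms : ∀ (s : Finset (Finset P)) (g : Finset P → ((Fin m → Finset P) →₀ ℚ)),
      (s.val.map g).sum = ∑ J ∈ s, g J := fun s g => rfl
  rw [hms, Finset.sum_image]
  · rfl
  · intro x hx y hy hxy
    simp only [Finset.mem_coe, Finset.mem_filter] at hx hy
    have : x ∈ insert y (T j) := by
      rw [← (show insert x (T j) = insert y (T j) from hxy)]; exact Finset.mem_insert_self x (T j)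
    rcases Finset.mem_insert.1 this with h | h
    · exact h
    · exact absurd h hx.2.2.1

/-- `XvT` as a linear map. -/
noncomputable def Xlin (a : Γ) :
    ((Fin m → Finset P) →₀ ℚ) →ₗ[ℚ] ((Fin m → Finset P) →₀ ℚ) :=
  Finsupp.lsum ℚ fun T => LinearMap.toSpanSingleton ℚ _ (XaT κ a T)

lemma XvT_eq_Xlin (a : Γ) (v : (Fin m → Finset P) →₀ ℚ) :
    XvT κ a v = Xlin κ a v := by
  rw [XvT, Xlin, Finsupp.lsum_apply]
  rfl

lemma Xlin_single (a : Γ) (T : Fin m → Finset P) (r : ℚ) :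
    Xlin κ a (Finsupp.single T r) = r • XaT κ a T := by
  rw [Xlin, Finsupp.lsum_single, LinearMap.toSpanSingleton_apply]

end Lin

section Main

variable {P Γ : Type} [Fintype P] [PartialOrder P] [DecidableEq P]
variable (κ : P → Γ) {m : ℕ}

/-- lower-set condition on a tuple. -/
def lowT (T : Fin m → Finset P) : Prop := ∀ j, IsLowerSet ((T j : Finset P) : Set P)

lemma lowT_update {T : Fin m → Finset P} (hT : lowT T) {j : Fin m} {a : Γ} {x : P}
    (hx : x ∈ Sset κ a (T j)) : lowT (Function.update T j (insert x (T j))) := by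
  intro k
  rcases eq_or_ne k j with rfl | hkj
  · rw [Function.update_self]
    exact (mem_Sset.1 hx).2.2
  · rw [Function.update_of_ne hkj]
    exact hT k

lemma supp_Xlin {a : Γ} {v : (Fin m → Finset P) →₀ ℚ}
    (hv : ∀ T ∈ v.support, lowT T) :
    ∀ T' ∈ (Xlin κ a v).support, lowT T' := by
  intro T' hT'
  rw [← XvT_eq_Xlin, XvT, Finsupp.sum] at hT'
  obtain ⟨T, hT, hT'2⟩ := Finsupp.mem_support_finset_sum T' hT'
  have hT'3 : T' ∈ (XaT κ a T).support := Finsupp.support_smul hT'2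
  rw [XaT_eq] at hT'3
  obtain ⟨j, _, hT'4⟩ := Finsupp.mem_support_finset_sum T' hT'3
  obtain ⟨x, hx, hT'5⟩ := Finsupp.mem_support_finset_sum T' hT'4
  have := Finsupp.support_single_subset hT'5
  rw [Finset.mem_singleton] at this
  subst this
  exact lowT_update κ (hv T hT) hx

/-- helper: commute double sums over distinct coordinates. -/
lemma sum_erase_comm {ι M : Type*} [Fintype ι] [DecidableEq ι] [AddCommGroup M]
    (f : ι → ι → M) :
    ∑ j : ι, ∑ k ∈ Finset.univ.erase j, f j k =
    ∑ j : ι, ∑ k ∈ Finset.univ.erase j, f k j := by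
  simp_rw [Finset.sum_erase_eq_sub (Finset.mem_univ _)]
  rw [Finset.sum_sub_distrib, Finset.sum_sub_distrib, Finset.sum_comm]

/-- Main commutation on a single lower tuple. -/
lemma main_comm {b c : Γ}
    (hbc : ∀ x y : P, x ⋖ y →
      ¬ ((κ x = b ∧ κ y = c) ∨ (κ x = c ∧ κ y = b)))
    (T : Fin m → Finset P) (hT : lowT T) :
    Xlin κ c (Xlin κ b (Finsupp.single T 1)) =
    Xlin κ b (Xlin κ c (Finsupp.single T 1)) := by
  have expand : ∀ a a' : Γ, Xlin κ a' (Xlin κ a (Finsupp.single T (1:ℚ))) =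
      ∑ j : Fin m, ∑ x ∈ Sset κ a (T j), ∑ k : Fin m,
        ∑ y ∈ Sset κ a' (Function.update T j (insert x (T j)) k),
          Finsupp.single (Function.update (Function.update T j (insert x (T j))) k
            (insert y (Function.update T j (insert x (T j)) k))) (1:ℚ) := by
    intro a a'
    rw [Xlin_single, one_smul, XaT_eq, map_sum]
    refine Finset.sum_congr rfl fun j _ => ?_
    rw [map_sum]
    refine Finset.sum_congr rfl fun x _ => ?_
    rw [Xlin_single, one_smul, XaT_eq]
  rw [expand, expand]
  -- split each inner ∑ k into k = j and k ≠ j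
  have split : ∀ (a a' : Γ),
      (∑ j : Fin m, ∑ x ∈ Sset κ a (T j), ∑ k : Fin m,
        ∑ y ∈ Sset κ a' (Function.update T j (insert x (T j)) k),
          Finsupp.single (Function.update (Function.update T j (insert x (T j))) k
            (insert y (Function.update T j (insert x (T j)) k))) (1:ℚ)) =
      (∑ j : Fin m, ∑ x ∈ Sset κ a (T j), ∑ y ∈ Sset κ a' (insert x (T j)),
          Finsupp.single (Function.update T j (insert y (insert x (T j)))) (1:ℚ))
      + ∑ j : Fin m, ∑ k ∈ Finset.univ.erase j, ∑ x ∈ Sset κ a (T j),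
          ∑ y ∈ Sset κ a' (T k),
          Finsupp.single (Function.update (Function.update T j (insert x (T j))) k
            (insert y (T k))) (1:ℚ) := by
    intro a a'
    have h1 : ∀ (j : Fin m) (x : P), (∑ k : Fin m,
        ∑ y ∈ Sset κ a' (Function.update T j (insert x (T j)) k),
          Finsupp.single (Function.update (Function.update T j (insert x (T j))) k
            (insert y (Function.update T j (insert x (T j)) k))) (1:ℚ)) =
        (∑ y ∈ Sset κ a' (insert x (T j)),
          Finsupp.single (Function.update T j (insert y (insert x (T j)))) (1:ℚ))
        + ∑ k ∈ Finset.univ.erase j, ∑ y ∈ Sset κ a' (T k),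
          Finsupp.single (Function.update (Function.update T j (insert x (T j))) k
            (insert y (T k))) (1:ℚ) := by
      intro j x
      rw [← Finset.add_sum_erase _ _ (Finset.mem_univ j)]
      congr 1
      · simp only [Function.update_self, Function.update_idem]
      · refine Finset.sum_congr rfl fun k hk => ?_
        rw [Function.update_of_ne (Finset.ne_of_mem_erase hk)]
    simp_rw [h1, Finset.sum_add_distrib]
    congr 1
    exact Finset.sum_congr rfl fun j _ => Finset.sum_comm
  rw [split, split]
  congr 1
  · -- diagonal parts
    refine Finset.sum_congr rfl fun j _ => ?_
    exact diag_swap hbc (hT j) (fun J => Finsupp.single (Function.update T j J) (1:ℚ))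
  · -- off-diagonal parts
    rw [sum_erase_comm]
    refine Finset.sum_congr rfl fun j _ => Finset.sum_congr rfl fun k hk => ?_
    rw [Finset.sum_comm]
    refine Finset.sum_congr rfl fun y _ => Finset.sum_congr rfl fun x _ => ?_
    rw [Function.update_comm (Finset.ne_of_mem_erase hk)]

end Main

section Lift

variable {P Γ : Type} [Fintype P] [PartialOrder P] [DecidableEq P]
variable (κ : P → Γ) {m : ℕ}

lemma comm_vec {b c : Γ}
    (hbc : ∀ x y : P, x ⋖ y →
      ¬ ((κ x = b ∧ κ y = c) ∨ (κ x = c ∧ κ y = b)))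
    (v : (Fin m → Finset P) →₀ ℚ) (hv : ∀ T ∈ v.support, lowT T) :
    Xlin κ c (Xlin κ b v) = Xlin κ b (Xlin κ c v) := by
  conv_lhs => rw [← Finsupp.sum_single v]
  conv_rhs => rw [← Finsupp.sum_single v]
  rw [Finsupp.sum, map_sum, map_sum, map_sum, map_sum]
  refine Finset.sum_congr rfl fun T hT => ?_
  have hs : Finsupp.single T (v T) = (v T) • Finsupp.single T (1:ℚ) := by
    rw [Finsupp.smul_single, smul_eq_mul, mul_one]
  rw [hs, map_smul, map_smul, map_smul, map_smul, main_comm κ hbc T (hv T hT)]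

lemma iter_supp (a : Γ) (k : ℕ) (v : (Fin m → Finset P) →₀ ℚ)
    (hv : ∀ T ∈ v.support, lowT T) :
    ∀ T ∈ ((Xlin κ a)^[k] v).support, lowT T := by
  induction k generalizing v with
  | zero => exact hv
  | succ n ih =>
    rw [Function.iterate_succ_apply]
    exact ih _ (supp_Xlin κ hv)

lemma iter_comm1 {b c : Γ}
    (hbc : ∀ x y : P, x ⋖ y →
      ¬ ((κ x = b ∧ κ y = c) ∨ (κ x = c ∧ κ y = b)))
    (p : ℕ) (v : (Fin m → Finset P) →₀ ℚ) (hv : ∀ T ∈ v.support, lowT T) :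
    Xlin κ c ((Xlin κ b)^[p] v) = (Xlin κ b)^[p] (Xlin κ c v) := by
  induction p generalizing v with
  | zero => rfl
  | succ n ih =>
    rw [Function.iterate_succ_apply', Function.iterate_succ_apply',
      comm_vec κ hbc _ (iter_supp κ b n v hv), ih v hv]

lemma iter_comm {b c : Γ}
    (hbc : ∀ x y : P, x ⋖ y →
      ¬ ((κ x = b ∧ κ y = c) ∨ (κ x = c ∧ κ y = b)))
    (p q : ℕ) (v : (Fin m → Finset P) →₀ ℚ) (hv : ∀ T ∈ v.support, lowT T) :
    (Xlin κ c)^[q] ((Xlin κ b)^[p] v) = (Xlin κ b)^[p] ((Xlin κ c)^[q] v) := by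
  induction q generalizing v with
  | zero => rfl
  | succ n ih =>
    rw [Function.iterate_succ_apply, Function.iterate_succ_apply,
      iter_comm1 κ hbc p v hv, ih _ (supp_Xlin κ hv)]

lemma iter_smul (a : Γ) (k : ℕ) (r : ℚ) (v : (Fin m → Finset P) →₀ ℚ) :
    (Xlin κ a)^[k] (r • v) = r • (Xlin κ a)^[k] v := by
  induction k generalizing v with
  | zero => rfl
  | succ n ih =>
    rw [Function.iterate_succ_apply, Function.iterate_succ_apply, map_smul, ih]

end Lift

/-- Proposition 5.2: if colors `b, c` are never the colors of two neighboring elements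
of the finite `Γ`-colored poset `P`, then `⟨c^q⟩∘⟨b^p⟩ = ⟨b^p⟩∘⟨c^q⟩` on all
`m`-tuples of order ideals of `P`. -/
theorem stmt14 (P Γ : Type) [Fintype P] [PartialOrder P] [DecidableEq P] [Nonempty P]
    (κ : P → Γ) (hsurj : Function.Surjective κ) (b c : Γ)
    (hbc : ∀ x y : P, x ⋖ y →
      ¬ ((κ x = b ∧ κ y = c) ∨ (κ x = c ∧ κ y = b)))
    (p q : ℕ) (m : ℕ) (hm : 1 ≤ m) :
    ∀ T : Fin m → Finset P, (∀ j, IsLowerSet (↑(T j) : Set P)) →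
      opPowT κ c q (opPowT κ b p (Finsupp.single T 1)) =
      opPowT κ b p (opPowT κ c q (Finsupp.single T 1)) := by
  intro T hT
  have hX : ∀ a : Γ, XvT κ a (m := m) = ⇑(Xlin κ a (m := m)) :=
    fun a => funext (XvT_eq_Xlin κ a)
  have hv : ∀ T' ∈ (Finsupp.single T (1:ℚ)).support, lowT T' := by
    intro T' h
    have := Finsupp.support_single_subset h
    rw [Finset.mem_singleton] at this
    subst this
    exact hT
  unfold opPowT
  rw [hX, hX, iter_smul, iter_smul, iter_comm κ hbc p q _ hv, smul_comm]
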